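/- Fix positive integers n and w, a probability space Ω, and a random hash function h : Ω → (Fin n → Fin w) that is pairwise uniform, i.e., for all distinct i, i' ∈ Fin n, P(h(i) = h(i')) ≤ 1/w. Let y ∈ ℝ^n have nonnegative entries, fix a coordinate i and a set T ⊆ Fin n, and let t = Σ_{i' ∉ T} y_{i'} be the weight of the tail outside T. Then the expected tail contribution to i's sketch cell satisfies E[ Σ_{i' ∉ T ∪ {i}, h(i') = h(i)} y_{i'} ] ≤ t/w, and hence for every η > 0, P( Σ_{i' ∉ T ∪ {i}, h(i') = h(i)} y_{i'} > η·t ) ≤ 1/(w·η); in particular this probability is at most 1/e if w ≥ e/η. -/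

import Mathlib

open Finset MeasureTheory ProbabilityTheory
open scoped ENNReal

/-- Tail-contribution bound for one row of a count-min sketch: for a pairwise
uniform random hash `h`, nonnegative `y`, a coordinate `i`, and a set `T`,
with tail weight `t = ∑_{i' ∉ T} y i'`, the expected contribution to `i`'s
cell from coordinates outside `T ∪ {i}` is at most `t/w`; hence for every
`η > 0`, this contribution exceeds `η t` with probability at most `1/(wη)`,
and in particular at most `1/e` whenever `w ≥ e/η`. -/
theorem cm_tail_contribution_bound
    (n w : ℕ) (hn : 0 < n) (hw : 0 < w)
    {Ω : Type*} [MeasureSpace Ω] [IsProbabilityMeasure (ℙ : Measure Ω)]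
    (h : Ω → Fin n → Fin w) (hmeas : Measurable h)
    (hpair : ∀ i i' : Fin n, i ≠ i' → ℙ {ω | h ω i = h ω i'} ≤ 1 / w)
    (y : Fin n → ℝ) (hy : ∀ i, 0 ≤ y i) (i : Fin n) (T : Finset (Fin n)) :
    (∫ ω, (∑ i' ∈ Finset.univ.filter
            (fun i' => i' ∉ T ∧ i' ≠ i ∧ h ω i' = h ω i), y i') ∂ℙ)
        ≤ (∑ i' ∈ Finset.univ.filter (fun i' => i' ∉ T), y i') / w ∧
    ∀ η : ℝ, 0 < η →
      ℙ {ω | (∑ i' ∈ Finset.univ.filter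
                (fun i' => i' ∉ T ∧ i' ≠ i ∧ h ω i' = h ω i), y i')
              > η * ∑ i' ∈ Finset.univ.filter (fun i' => i' ∉ T), y i'}
          ≤ ENNReal.ofReal (1 / (w * η)) ∧
      (Real.exp 1 / η ≤ w →
        ℙ {ω | (∑ i' ∈ Finset.univ.filter
                  (fun i' => i' ∉ T ∧ i' ≠ i ∧ h ω i' = h ω i), y i')
                > η * ∑ i' ∈ Finset.univ.filter (fun i' => i' ∉ T), y i'}
            ≤ ENNReal.ofReal (1 / Real.exp 1)) := by
  classical
  set X : Ω → ℝ := fun ω => ∑ i' ∈ Finset.univ.filter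
      (fun i' => i' ∉ T ∧ i' ≠ i ∧ h ω i' = h ω i), y i' with hX
  set S : Finset (Fin n) := Finset.univ.filter (fun i' => i' ∉ T ∧ i' ≠ i) with hS
  set t : ℝ := ∑ i' ∈ Finset.univ.filter (fun i' => i' ∉ T), y i' with ht
  have hA : ∀ i' : Fin n, MeasurableSet {ω | h ω i' = h ω i} :=
    fun i' => measurableSet_eq_fun
      ((measurable_pi_apply i').comp hmeas) ((measurable_pi_apply i).comp hmeas)
  have hXrep : ∀ ω, X ω = ∑ i' ∈ S,
      Set.indicator {ω | h ω i' = h ω i} (fun _ => y i') ω := by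
    intro ω
    have heq : Finset.univ.filter (fun i' => i' ∉ T ∧ i' ≠ i ∧ h ω i' = h ω i)
        = S.filter (fun i' => h ω i' = h ω i) := by
      rw [hS, Finset.filter_filter]
      congr 1
      ext i'
      tauto
    calc X ω = ∑ i' ∈ S.filter (fun i' => h ω i' = h ω i), y i' :=
          Finset.sum_congr heq fun _ _ => rfl
      _ = _ := by
          rw [Finset.sum_filter]
          refine Finset.sum_congr rfl fun i' _ => ?_
          by_cases hh : h ω i' = h ω i <;> simp [Set.indicator, hh]
  have hint : ∀ i' : Fin n, Integrable
      (Set.indicator {ω | h ω i' = h ω i} (fun _ => y i')) ℙ :=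
    fun i' => (integrable_const (y i')).indicator (hA i')
  have hXint : Integrable X ℙ := by
    have : Integrable (fun ω => ∑ i' ∈ S,
        Set.indicator {ω | h ω i' = h ω i} (fun _ => y i') ω) ℙ :=
      integrable_finset_sum _ fun i' _ => hint i'
    exact this.congr (Filter.Eventually.of_forall fun ω => (hXrep ω).symm)
  have hXnonneg : ∀ ω, 0 ≤ X ω := fun ω =>
    Finset.sum_nonneg fun i' _ => hy i'
  have hprob : ∀ i' : Fin n, i' ∈ S → (ℙ {ω | h ω i' = h ω i}).toReal ≤ 1 / w := by
    intro i' hi'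
    have hne : i' ≠ i := (Finset.mem_filter.mp hi').2.2
    have := hpair i' i hne
    have hle : (ℙ {ω | h ω i' = h ω i}).toReal ≤ ((1 : ℝ≥0∞) / w).toReal := by
      refine ENNReal.toReal_mono ?_ this
      simp [ENNReal.div_eq_top, hw.ne']
    refine hle.trans_eq ?_
    rw [ENNReal.toReal_div]
    simp
  have hexp : ∫ ω, X ω ∂ℙ ≤ t / w := by
    rw [integral_congr_ae (Filter.Eventually.of_forall hXrep),
      integral_finset_sum _ fun i' _ => hint i']
    have h1 : ∀ i' ∈ S, ∫ ω, Set.indicator {ω | h ω i' = h ω i} (fun _ => y i') ω ∂ℙ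
        = (ℙ {ω | h ω i' = h ω i}).toReal * y i' := by
      intro i' _
      rw [integral_indicator_const _ (hA i')]
      simp [smul_eq_mul, Measure.real]
    rw [Finset.sum_congr rfl h1]
    have h2 : ∑ i' ∈ S, (ℙ {ω | h ω i' = h ω i}).toReal * y i'
        ≤ ∑ i' ∈ S, (1 / w) * y i' := by
      refine Finset.sum_le_sum fun i' hi' => mul_le_mul_of_nonneg_right (hprob i' hi') (hy i')
    refine h2.trans ?_
    rw [← Finset.mul_sum]
    have hsub : S ⊆ Finset.univ.filter (fun i' => i' ∉ T) := by
      intro i' hi'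
      simp only [hS, Finset.mem_filter] at hi' ⊢
      exact ⟨hi'.1, hi'.2.1⟩
    have h3 : ∑ i' ∈ S, y i' ≤ t :=
      Finset.sum_le_sum_of_subset_of_nonneg hsub fun j _ _ => hy j
    have hwpos : (0:ℝ) < w := Nat.cast_pos.mpr hw
    calc (1 / (w:ℝ)) * ∑ i' ∈ S, y i' ≤ (1 / w) * t :=
          mul_le_mul_of_nonneg_left h3 (by positivity)
      _ = t / w := by field_simp
  refine ⟨hexp, fun η hη => ?_⟩
  have hwpos : (0:ℝ) < w := Nat.cast_pos.mpr hw
  have htnonneg : 0 ≤ t := Finset.sum_nonneg fun i' _ => hy i'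
  have hmain : ℙ {ω | X ω > η * t} ≤ ENNReal.ofReal (1 / (w * η)) := by
    rcases eq_or_lt_of_le htnonneg with hzero | htpos
    · -- t = 0, so X = 0 everywhere, set is empty
      have hy0 : ∀ i' ∈ Finset.univ.filter (fun i' => i' ∉ T), y i' = 0 := by
        intro i' hi'
        exact (Finset.sum_eq_zero_iff_of_nonneg fun j _ => hy j).mp hzero.symm i' hi'
      have hX0 : ∀ ω, X ω = 0 := by
        intro ω
        refine Finset.sum_eq_zero fun i' hi' => ?_
        have := (Finset.mem_filter.mp hi').2.1
        exact hy0 i' (Finset.mem_filter.mpr ⟨Finset.mem_univ _, this⟩)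
      have : {ω | X ω > η * t} = ∅ := by
        ext ω; simp [hX0 ω, ← hzero]
      rw [this]
      simp
    · have hmarkov := mul_meas_ge_le_integral_of_nonneg
        (Filter.Eventually.of_forall hXnonneg) hXint (η * t) (μ := ℙ)
      have hεpos : 0 < η * t := mul_pos hη htpos
      have hsub : {ω | X ω > η * t} ⊆ {ω | η * t ≤ X ω} := fun ω hω => le_of_lt (Set.mem_setOf_eq ▸ hω)
      have h1 : (ℙ {ω | η * t ≤ X ω}).toReal ≤ 1 / (w * η) := by
        have h2 : (ℙ {ω | η * t ≤ X ω}).toReal ≤ (∫ ω, X ω ∂ℙ) / (η * t) :=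
          (le_div_iff₀ hεpos).mpr (by rw [← measureReal_def]; linarith [hmarkov])
        refine h2.trans ?_
        rw [div_le_div_iff₀ hεpos (by positivity)]
        calc (∫ ω, X ω ∂ℙ) * (w * η) ≤ (t / w) * (w * η) :=
              mul_le_mul_of_nonneg_right hexp (by positivity)
          _ = 1 * (η * t) := by field_simp
      calc ℙ {ω | X ω > η * t} ≤ ℙ {ω | η * t ≤ X ω} := measure_mono hsub
        _ = ENNReal.ofReal (ℙ {ω | η * t ≤ X ω}).toReal := by
            rw [ENNReal.ofReal_toReal (measure_ne_top _ _)]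
        _ ≤ ENNReal.ofReal (1 / (w * η)) := ENNReal.ofReal_le_ofReal h1
  refine ⟨hmain, fun hwe => ?_⟩
  refine hmain.trans (ENNReal.ofReal_le_ofReal ?_)
  have hepos : 0 < Real.exp 1 := Real.exp_pos 1
  rw [div_le_div_iff₀ (by positivity) hepos]
  have : Real.exp 1 ≤ w * η := by
    rw [div_le_iff₀ hη] at hwe
    linarith
  linarith
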